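/- Let V be a 4-dimensional and U a 3-dimensional vector space over a field of characteristic different from 2, and let A in V tensor Sym^2(U) be a symmetrization of the cubic symmetroid Gamma_A, of one of the types (1)-(6) (Gamma_A irreducible, or the union of a smooth quadric with a tangent plane). Then the rational maps satisfy q_A = gamma_A composed with c_A, where q_A : P(U) --> P(V^dual) is the map defined by the quadrics of A, gamma_A : Gamma_A --> P(V^dual) is the Gauss map of Gamma_A, and c_A : P(U) --> P(V) is the adjugation map given by the adjugate of the 3x4 matrix A_U. -/

import Mathlib

/-!
Common geometric definitions.
-/

noncomputable section

open MvPolynomial Matrix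

/-- The projective space `ℙ³` over `k`, modelled on `k⁴`. -/
abbrev Proj3 (k : Type*) [Field k] := Projectivization k (Fin 4 → k)

/-- The projective plane `ℙ²` over `k`, modelled on `k³`. -/
abbrev Proj2 (k : Type*) [Field k] := Projectivization k (Fin 3 → k)

/-- The linear form with coefficient vector `c`, as a multivariate polynomial. -/
def linPoly {R : Type*} [CommSemiring R] {n : ℕ} (c : Fin n → R) : MvPolynomial (Fin n) R :=
  ∑ i, C (c i) * X i

/-- The gradient vector of a multivariate polynomial at a point. -/
def gradVec {R : Type*} [CommSemiring R] {n : ℕ} (f : MvPolynomial (Fin n) R)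
    (v : Fin n → R) : Fin n → R :=
  fun j => eval v (pderiv j f)

/-- A point of `ℙ³` is a singular point of the surface `f = 0`
(for `f` homogeneous this does not depend on the chosen representative). -/
def IsSingPt {k : Type*} [Field k] (f : MvPolynomial (Fin 4) k) (x : Proj3 k) : Prop :=
  eval x.rep f = 0 ∧ ∀ j, eval x.rep (pderiv j f) = 0

/-- The quadratic form, as a polynomial, of a `4 × 4` matrix. -/
def quadPoly {R : Type*} [CommSemiring R] (A : Matrix (Fin 4) (Fin 4) R) :
    MvPolynomial (Fin 4) R :=
  ∑ i, ∑ j, C (A i j) * X i * X j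

/-- The quadric surface in `ℙ³` cut out by a (symmetric) `4 × 4` matrix. -/
def quadricSet {k : Type*} [Field k] (A : Matrix (Fin 4) (Fin 4) k) : Set (Proj3 k) :=
  {x | x.rep ⬝ᵥ A.mulVec x.rep = 0}

/-- A symmetric `3 × 3` matrix of linear forms on `k⁴`; equivalently, a tensor
`A ∈ V ⊗ Sym² U` with `dim V = 4`, `dim U = 3`.  This is the data of a symmetrization
of a cubic symmetroid in `ℙ³ = ℙ(V)`. -/
structure SymMat (k : Type*) [Field k] : Type _ where
  entry : Fin 3 → Fin 3 → Fin 4 → k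
  symm : ∀ a b, entry a b = entry b a

namespace SymMat

variable {k : Type*} [Field k]

/-- Evaluating the matrix of linear forms at `v ∈ k⁴` gives a symmetric `3 × 3` matrix,
i.e. a conic on `ℙ²`.  This is the contraction `A_V : V∨ → Sym² U`. -/
def evalAt (M : SymMat k) (v : Fin 4 → k) : Matrix (Fin 3) (Fin 3) k :=
  Matrix.of fun a b => ∑ i, M.entry a b i * v i

/-- Non-degeneracy of a symmetrization: the contraction `A_V : V∨ → Sym² U` is injective. -/
def Nondeg (M : SymMat k) : Prop :=
  Function.Injective fun v : Fin 4 → k => M.evalAt v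

/-- The determinant of the symmetric matrix of linear forms: a cubic form on `k⁴`. -/
def detPoly (M : SymMat k) : MvPolynomial (Fin 4) k :=
  (Matrix.of fun a b => linPoly (M.entry a b)).det

/-- The cubic symmetroid surface `Γ_A ⊆ ℙ³` cut out by `det A_V = 0`. -/
def cubicLocus (M : SymMat k) : Set (Proj3 k) :=
  {x | (M.evalAt x.rep).det = 0}

/-- The four quadrics `q₀, …, q₃` of the symmetrization, evaluated at `z ∈ k³`.
The symmetrization map `𝔮_A : ℙ² → ℙ̂³` is `[z] ↦ [quads M z]`. -/
def quads (M : SymMat k) (z : Fin 3 → k) : Fin 4 → k :=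
  fun i => ∑ a, ∑ b, z a * M.entry a b i * z b

/-- The four quadrics of the symmetrization, as polynomials in three variables. -/
def quadsPoly (M : SymMat k) (i : Fin 4) : MvPolynomial (Fin 3) k :=
  ∑ a, ∑ b, C (M.entry a b i) * X a * X b

end SymMat

/-- The pullback `𝔮_A⁻¹(Q̂)` of the dual quadric of `A` under the symmetrization map of `M`:
the dual quadric (resp. the plane dual to the vertex, when `A` is a cone)
is cut out in the dual `ℙ³` by the adjugate matrix of `A`. -/
def symPullbackQuadric {k : Type*} [Field k] (M : SymMat k)
    (A : Matrix (Fin 4) (Fin 4) k) : Set (Proj2 k) :=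
  {z | (M.quads z.rep) ⬝ᵥ (A.adjugate.mulVec (M.quads z.rep)) = 0}



/-- The `3 × 4` matrix `A_U(z)` of the contraction `A_U : U∨ → V ⊗ U`, evaluated at
`z ∈ k³`; its kernel describes the conics of the symmetrization singular at `[z]`. -/
def SymMat.sideMat {k : Type} [Field k] (M : SymMat k) (z : Fin 3 → k) :
    Matrix (Fin 3) (Fin 4) k :=
  Matrix.of fun a i => ∑ b, M.entry a b i * z b

/-- The adjugate of the `3 × 4` matrix `A_U`: the vector of its four signed maximal
minors, whose entries are cubic forms in `z`.  The adjugation map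
`𝔠_A : ℙ² --> ℙ³` is `[z] ↦ [adjVec M z]`. -/
def SymMat.adjVec {k : Type} [Field k] (M : SymMat k) (z : Fin 3 → k) : Fin 4 → k :=
  fun i => (-1 : k) ^ (i : ℕ) * ((M.sideMat z).submatrix id i.succAbove).det

/-- The cubic surface `{F = 0}` is the union of a *smooth* quadric and a plane *tangent*
to it (type (6) in the classification of cubic symmetroids). -/
def IsQuadricPlusTangentPlane {K : Type*} [Field K] (F : MvPolynomial (Fin 4) K) : Prop :=
  ∃ q l : MvPolynomial (Fin 4) K, q.IsHomogeneous 2 ∧ l.IsHomogeneous 1 ∧ F = q * l ∧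
    (∀ v : Fin 4 → K, v ≠ 0 → MvPolynomial.eval v q = 0 → gradVec q v ≠ 0) ∧
    (∃ v : Fin 4 → K, v ≠ 0 ∧ MvPolynomial.eval v q = 0 ∧ MvPolynomial.eval v l = 0 ∧
      ∃ c : K, gradVec q v = c • fun j => MvPolynomial.eval (Pi.single j 1) l)


/-! ### Auxiliary lemmas for Statement 15 -/

section Statement15Aux

open MvPolynomial Matrix

/-- A 3×4 matrix annihilates its vector of signed maximal minors. -/
theorem aux_stepA {k : Type} [Field k] (S : Matrix (Fin 3) (Fin 4) k) (a : Fin 3) :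
    ∑ i : Fin 4, S a i * ((-1:k)^(i:ℕ) * ((S.submatrix id i.succAbove).det)) = 0 := by
  have h00 : (0:Fin 4).succAbove 0 = 1 := by decide
  have h01 : (0:Fin 4).succAbove 1 = 2 := by decide
  have h02 : (0:Fin 4).succAbove 2 = 3 := by decide
  have h10 : (1:Fin 4).succAbove 0 = 0 := by decide
  have h11 : (1:Fin 4).succAbove 1 = 2 := by decide
  have h12 : (1:Fin 4).succAbove 2 = 3 := by decide
  have h20 : (2:Fin 4).succAbove 0 = 0 := by decide
  have h21 : (2:Fin 4).succAbove 1 = 1 := by decide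
  have h22 : (2:Fin 4).succAbove 2 = 3 := by decide
  have h30 : (3:Fin 4).succAbove 0 = 0 := by decide
  have h31 : (3:Fin 4).succAbove 1 = 1 := by decide
  have h32 : (3:Fin 4).succAbove 2 = 2 := by decide
  fin_cases a <;>
  · simp [Fin.sum_univ_four, Matrix.det_fin_three, Matrix.submatrix_apply,
      h00,h01,h02,h10,h11,h12,h20,h21,h22,h30,h31,h32, show ((3:Fin 4):ℕ) = 3 from rfl]
    ring

theorem aux_eval_linPoly {k : Type} [Field k] (c v : Fin 4 → k) :
    eval v (linPoly c) = ∑ i, c i * v i := by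
  simp [linPoly]

theorem aux_eval_pderiv_linPoly {k : Type} [Field k] (c v : Fin 4 → k) (j : Fin 4) :
    eval v (pderiv j (linPoly c)) = c j := by
  simp [linPoly, pderiv_X, Pi.single_apply]

theorem aux_adj_sum {k : Type} [Field k] (A : Matrix (Fin 3) (Fin 3) k) (d : Fin 3 → Fin 3 → k) :
    ∑ a : Fin 3, ∑ b : Fin 3, A.adjugate b a * d a b =
      (A 1 1 * A 2 2 - A 1 2 * A 2 1) * d 0 0
      + (A 1 2 * A 2 0 - A 1 0 * A 2 2) * d 0 1
      + (A 1 0 * A 2 1 - A 1 1 * A 2 0) * d 0 2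
      + (A 0 2 * A 2 1 - A 0 1 * A 2 2) * d 1 0
      + (A 0 0 * A 2 2 - A 0 2 * A 2 0) * d 1 1
      + (A 0 1 * A 2 0 - A 0 0 * A 2 1) * d 1 2
      + (A 0 1 * A 1 2 - A 0 2 * A 1 1) * d 2 0
      + (A 0 2 * A 1 0 - A 0 0 * A 1 2) * d 2 1
      + (A 0 0 * A 1 1 - A 0 1 * A 1 0) * d 2 2 := by
  simp [Matrix.adjugate_fin_three, Fin.sum_univ_three]
  ring

set_option maxHeartbeats 1000000 in
/-- Jacobi's formula for a 3×3 matrix of linear forms on `k⁴`. -/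
theorem aux_jac {k : Type} [Field k] (e : Fin 3 → Fin 3 → Fin 4 → k) (v : Fin 4 → k) (j : Fin 4) :
    eval v (pderiv j (Matrix.of fun a b => linPoly (e a b)).det) =
    ∑ a : Fin 3, ∑ b : Fin 3,
      (Matrix.of fun a b => ∑ i, e a b i * v i).adjugate b a * e a b j := by
  rw [aux_adj_sum]
  simp only [Matrix.det_fin_three, Matrix.of_apply, map_sub, map_add, pderiv_mul, eval_add,
    eval_sub, eval_mul, aux_eval_linPoly, aux_eval_pderiv_linPoly]
  ring

/-- A 3×3 matrix with vanishing adjugate has all 2×2 minors zero. -/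
theorem aux_minors_zero {k : Type} [Field k] (N : Matrix (Fin 3) (Fin 3) k)
    (h : N.adjugate = 0) (a b c d : Fin 3) : N a b * N c d = N a d * N c b := by
  have minor : ∀ i j : Fin 3,
      N (j.succAbove 0) (i.succAbove 0) * N (j.succAbove 1) (i.succAbove 1) =
      N (j.succAbove 0) (i.succAbove 1) * N (j.succAbove 1) (i.succAbove 0) := by
    intro i j
    have m : N.adjugate i j = 0 := by rw [h]; rfl
    rw [Matrix.adjugate_fin_succ_eq_det_submatrix] at m
    have hne : ((-1 : k) ^ ((j : ℕ) + i)) ≠ 0 := pow_ne_zero _ (by norm_num)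
    have hdet : (N.submatrix j.succAbove i.succAbove).det = 0 :=
      (mul_eq_zero.mp m).resolve_left hne
    rw [Matrix.det_fin_two] at hdet
    simp only [Matrix.submatrix_apply] at hdet
    linear_combination hdet
  by_cases hac : a = c
  · subst hac; ring
  by_cases hbd : b = d
  · subst hbd; ring
  have pair : ∀ x y : Fin 3, x ≠ y → ∃ j : Fin 3,
      (j.succAbove 0 = x ∧ j.succAbove 1 = y) ∨ (j.succAbove 0 = y ∧ j.succAbove 1 = x) := by
    decide
  obtain ⟨jj, hj⟩ := pair a c hac
  obtain ⟨ii, hi⟩ := pair b d hbd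
  have key := minor ii jj
  rcases hj with ⟨h1, h2⟩ | ⟨h1, h2⟩ <;> rcases hi with ⟨h3, h4⟩ | ⟨h3, h4⟩ <;>
    rw [h1, h2, h3, h4] at key <;> first | linear_combination key | linear_combination -key

/-- If some 2×2 minor of `B` is invertible, every kernel vector of `B` is determined by a
single coordinate. -/
theorem aux_ker_scaled {k : Type} [Field k] (B : Matrix (Fin 3) (Fin 3) k) (i j : Fin 3)
    (hd : (B.submatrix j.succAbove i.succAbove).det ≠ 0)
    (v : Fin 3 → k) (hv : B.mulVec v = 0) :
    v = v i • (Fin.insertNth (α := fun _ => k) i 1 ((B.submatrix j.succAbove i.succAbove).det⁻¹ •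
      ((B.submatrix j.succAbove i.succAbove).adjugate *ᵥ fun r => -B (j.succAbove r) i))) := by
  set B' := B.submatrix j.succAbove i.succAbove with hB'
  set c : Fin 2 → k := fun r => -B (j.succAbove r) i with hc
  set w : Fin 2 → k := fun s => v (i.succAbove s) with hw
  have key : B' *ᵥ w = v i • c := by
    funext r
    have h0 : (B.mulVec v) (j.succAbove r) = 0 := by rw [hv]; rfl
    rw [Matrix.mulVec, dotProduct, Fin.sum_univ_succAbove _ i] at h0
    simp only [Matrix.mulVec, dotProduct, Pi.smul_apply, smul_eq_mul, hB', hc, hw,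
      Matrix.submatrix_apply]
    have : ∑ s : Fin 2, B (j.succAbove r) (i.succAbove s) * v (i.succAbove s)
        = -(B (j.succAbove r) i * v i) := by linear_combination h0
    rw [this]; ring
  have key2 : B'.det • w = v i • (B'.adjugate *ᵥ c) := by
    calc B'.det • w = (B'.det • (1 : Matrix (Fin 2) (Fin 2) k)) *ᵥ w := by
          rw [Matrix.smul_mulVec, Matrix.one_mulVec]
      _ = B'.adjugate *ᵥ (B' *ᵥ w) := by rw [Matrix.mulVec_mulVec, Matrix.adjugate_mul]
      _ = v i • (B'.adjugate *ᵥ c) := by rw [key, Matrix.mulVec_smul]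
  funext x
  refine Fin.succAboveCases i ?_ ?_ x
  · simp [Fin.insertNth_apply_same]
  · intro s
    have := congrFun key2 s
    simp only [Pi.smul_apply, smul_eq_mul, hw] at this
    have hval : v (i.succAbove s) = v i * (B'.det⁻¹ * (B'.adjugate *ᵥ c) s) := by
      field_simp
      linear_combination this
    simp [Fin.insertNth_apply_succAbove, hval]
    left
    fin_cases s <;> rfl

end Statement15Aux

/-- Lemma 3.4 of the paper.  Let `V` be 4-dimensional and `U`
3-dimensional over a field of characteristic `≠ 2`, and let `A ∈ V ⊗ Sym² U` (encoded by
the symmetric matrix of linear forms `M`) be a symmetrization of the cubic symmetroid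
`Γ_A` of one of the types (1)–(6), i.e. with `Γ_A` irreducible (over an algebraic
closure) or the union of a smooth quadric with a tangent plane.  Then the rational maps
satisfy `𝔮_A = γ_A ∘ 𝔠_A`, where `𝔮_A : ℙ(U) --> ℙ(V∨)`, `[z] ↦ [quads z]` is the map
defined by the quadrics of `A`, `γ_A` is the Gauss map `p ↦ [∇(det A_V)(p)]` of `Γ_A`,
and `𝔠_A : ℙ(U) --> ℙ(V)`, `[z] ↦ [adjVec z]` is the adjugation map given by the adjugate
of the `3 × 4` matrix `A_U`.  (The equality is asserted at every point where all three
maps are defined.) -/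
theorem statement15 (k : Type) [Field k] (hchar : ringChar k ≠ 2)
    (M : SymMat k) (hnd : M.Nondeg)
    (htype :
      Irreducible
        (MvPolynomial.map (algebraMap k (AlgebraicClosure k)) M.detPoly) ∨
      IsQuadricPlusTangentPlane
        (MvPolynomial.map (algebraMap k (AlgebraicClosure k)) M.detPoly)) :
    ∀ z : Fin 3 → k, z ≠ 0 →
      ∀ (hq : M.quads z ≠ 0) (hg : gradVec M.detPoly (M.adjVec z) ≠ 0),
        Projectivization.mk k (M.quads z) hq =
          Projectivization.mk k (gradVec M.detPoly (M.adjVec z)) hg := by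
  intro z hz hq hg
  classical
  set p : Fin 4 → k := M.adjVec z with hp
  set B : Matrix (Fin 3) (Fin 3) k := M.evalAt p with hB
  -- Step A : z is in the kernel of B
  have hBz : B *ᵥ z = 0 := by
    funext a
    have h1 : (B *ᵥ z) a = ∑ i : Fin 4, M.sideMat z a i * M.adjVec z i := by
      simp only [hB, Matrix.mulVec, dotProduct, SymMat.evalAt, SymMat.sideMat,
        Matrix.of_apply, Finset.sum_mul, Finset.mul_sum]
      rw [Finset.sum_comm]
      refine Finset.sum_congr rfl fun i _ => Finset.sum_congr rfl fun b _ => by ring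
    rw [h1]
    exact aux_stepA (M.sideMat z) a
  -- Step B : det B = 0
  have hdetB : B.det = 0 :=
    Matrix.exists_mulVec_eq_zero_iff.mp ⟨z, hz, hBz⟩
  -- Step C : Jacobi's formula for the gradient
  have hgrad : ∀ jj : Fin 4, gradVec M.detPoly p jj =
      ∑ a : Fin 3, ∑ b : Fin 3, B.adjugate b a * M.entry a b jj := by
    intro jj
    exact aux_jac M.entry p jj
  set N : Matrix (Fin 3) (Fin 3) k := B.adjugate with hN
  -- Step D : N ≠ 0
  have hN0 : N ≠ 0 := by
    intro h0
    apply hg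
    funext jj
    rw [hgrad jj]
    simp only [← hN, h0, Matrix.zero_apply, zero_mul, Finset.sum_const_zero]
    rfl
  -- Step E : a nonzero entry of N
  obtain ⟨a0, ha0⟩ : ∃ a0, (N a0 : Fin 3 → k) ≠ 0 := Function.ne_iff.mp hN0
  obtain ⟨b0, hb0⟩ : ∃ b0, N a0 b0 ≠ 0 := Function.ne_iff.mp ha0
  -- Step F : adjugate of N vanishes, so all 2×2 minors of N vanish
  have hadjN : N.adjugate = 0 := by
    have h3 : Fintype.card (Fin 3) ≠ 1 := by norm_num
    rw [hN, Matrix.adjugate_adjugate B h3, hdetB]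
    norm_num
  have minors := aux_minors_zero N hadjN
  -- Step G : N is symmetric
  have hBs : Bᵀ = B := by
    ext a b
    simp only [Matrix.transpose_apply, hB, SymMat.evalAt, Matrix.of_apply, M.symm a b]
  have hNs : ∀ a b, N a b = N b a := by
    intro a b
    calc N a b = (B.adjugate)ᵀ b a := rfl
      _ = (Bᵀ).adjugate b a := by rw [Matrix.adjugate_transpose]
      _ = N b a := by rw [hBs]
  -- Step H : the column u of N lies in the kernel of B
  set u : Fin 3 → k := fun a => N a b0 with hu
  have hBu : B *ᵥ u = 0 := by
    have hBN : B * N = 0 := by rw [hN, Matrix.mul_adjugate, hdetB, zero_smul]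
    funext a
    have h2 : (B * N) a b0 = 0 := by rw [hBN]; rfl
    rw [Matrix.mul_apply] at h2
    simpa [Matrix.mulVec, dotProduct, hu] using h2
  -- Step J : u is proportional to z
  have hdsub : (B.submatrix b0.succAbove a0.succAbove).det ≠ 0 := by
    intro h0
    apply hb0
    have h2 := Matrix.adjugate_fin_succ_eq_det_submatrix B a0 b0
    rw [hN, h2, h0, mul_zero]
  have hzE := aux_ker_scaled B a0 b0 hdsub z hBz
  have huE := aux_ker_scaled B a0 b0 hdsub u hBu
  have hza : z a0 ≠ 0 := by
    intro h0
    apply hz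
    rw [hzE, h0, zero_smul]
  set t : k := u a0 / z a0 with ht
  have huz : ∀ a, u a = t * z a := by
    intro a
    have h1 := congrFun hzE a
    have h2 := congrFun huE a
    simp only [Pi.smul_apply, smul_eq_mul] at h1 h2
    rw [h1, h2, ht]
    field_simp
  -- Step I : N is a scalar multiple of z ⊗ z
  set c0 : k := N a0 b0 with hc0
  set d0 : k := N a0 a0 with hd0
  have key : ∀ a b, N a b * (c0 * c0) = d0 * (u a * u b) := by
    intro a b
    have m1 := minors a b a0 b0
    have m2 := minors b a0 a0 b0
    have hs := hNs a0 b
    simp only [hu, hc0, hd0]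
    linear_combination (N a0 b0) * m1 + (N a b0) * (N a0 b0) * hs + (N a b0) * m2
  -- Step K : the gradient is proportional to the quadrics
  set e : k := d0 * (t * t) / (c0 * c0) with he
  have hc00 : c0 ≠ 0 := hb0
  have hNba : ∀ a b, N b a = e * (z a * z b) := by
    intro a b
    have h2 := key b a
    rw [huz a, huz b] at h2
    rw [he]
    field_simp
    linear_combination h2
  have hgq : gradVec M.detPoly p = e • M.quads z := by
    funext jj
    rw [Pi.smul_apply, smul_eq_mul, hgrad jj]
    have h3 : ∀ a b : Fin 3, B.adjugate b a * M.entry a b jj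
        = e * (z a * M.entry a b jj * z b) := by
      intro a b
      rw [show B.adjugate b a = N b a from rfl, hNba a b]; ring
    rw [show (M.quads z jj = ∑ a : Fin 3, ∑ b : Fin 3, z a * M.entry a b jj * z b) from rfl,
      Finset.mul_sum]
    refine Finset.sum_congr rfl fun a _ => ?_
    rw [Finset.mul_sum]
    exact Finset.sum_congr rfl fun b _ => h3 a b
  have he0 : e ≠ 0 := by
    intro h0
    apply hg
    rw [show gradVec M.detPoly (M.adjVec z) = gradVec M.detPoly p from rfl, hgq, h0, zero_smul]
  -- Conclusion
  rw [Projectivization.mk_eq_mk_iff]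
  refine ⟨(Units.mk0 e he0)⁻¹, ?_⟩
  show (Units.mk0 e he0)⁻¹ • gradVec M.detPoly (M.adjVec z) = M.quads z
  rw [show gradVec M.detPoly (M.adjVec z) = gradVec M.detPoly p from rfl, hgq]
  rw [Units.smul_def]
  simp [smul_smul, inv_mul_cancel₀ he0]


end
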